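/- Let M be a nonnegative real square matrix indexed by Fin s₁ ⊕ Fin s₂ with s₁, s₂ ≥ 1, partitioned into four blocks with square diagonal blocks. Let A be the 2×2 matrix whose (i,j) entry a_{ij} is the minimum row sum within block (i,j) of M. Then ρ(M) ≥ tr(A)/2 + √((tr(A)/2)² − det(A)). -/

import Mathlib

open Matrix Filter

open scoped ENNReal NNReal Topology

/-- Spectral radius of a real square matrix: the maximum of the moduli of its
complex eigenvalues (elements of the spectrum of the matrix over `ℂ`). -/
noncomputable def specRad {n : Type*} [Fintype n] [DecidableEq n]
    (M : Matrix n n ℝ) : ℝ :=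
  sSup ((fun z : ℂ => ‖z‖) '' spectrum ℂ (M.map (algebraMap ℝ ℂ)))

section Aux

attribute [local instance] Matrix.linftyOpNormedRing Matrix.linftyOpNormedAlgebra

lemma linfty_norm_map_complex {n : Type*} [Fintype n] [DecidableEq n]
    (B : Matrix n n ℝ) : ‖B.map (algebraMap ℝ ℂ)‖ = ‖B‖ := by
  have h : ‖B.map (algebraMap ℝ ℂ)‖₊ = ‖B‖₊ := by
    simp only [Matrix.linfty_opNNNorm_def, Matrix.map_apply]
    congr 1
    funext i
    congr 1
    funext j
    simp [Complex.nnnorm_real]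
  calc ‖B.map (algebraMap ℝ ℂ)‖ = (‖B.map (algebraMap ℝ ℂ)‖₊ : ℝ) := rfl
    _ = (‖B‖₊ : ℝ) := by rw [h]
    _ = ‖B‖ := rfl

lemma le_specRad_of_subinvariant {n : Type*} [Fintype n] [DecidableEq n] [Nonempty n]
    (N : Matrix n n ℝ) (hN : ∀ p q, 0 ≤ N p q) {r : ℝ} (hr : 0 ≤ r)
    {z : n → ℝ} (hz : ∀ p, 0 ≤ z p) (p₀ : n) (hp₀ : 0 < z p₀)
    (hsub : ∀ p, r * z p ≤ N.mulVec z p) : r ≤ specRad N := by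
  classical
  -- iterated sub-invariance
  have key : ∀ k : ℕ, ∀ p, r ^ k * z p ≤ (N ^ k).mulVec z p := by
    intro k
    induction k with
    | zero => intro p; simp [Matrix.one_mulVec]
    | succ k ih =>
      intro p
      have h2 : N.mulVec (fun q => r ^ k * z q) p ≤ N.mulVec ((N ^ k).mulVec z) p := by
        simp only [Matrix.mulVec, dotProduct]
        exact Finset.sum_le_sum fun q _ => mul_le_mul_of_nonneg_left (ih q) (hN p q)
      have h3 : N.mulVec (fun q => r ^ k * z q) p = r ^ k * N.mulVec z p := by
        simp only [Matrix.mulVec, dotProduct, Finset.mul_sum]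
        exact Finset.sum_congr rfl fun q _ => by ring
      calc r ^ (k + 1) * z p = r ^ k * (r * z p) := by ring
        _ ≤ r ^ k * (N.mulVec z p) :=
            mul_le_mul_of_nonneg_left (hsub p) (pow_nonneg hr k)
        _ = N.mulVec (fun q => r ^ k * z q) p := h3.symm
        _ ≤ N.mulVec ((N ^ k).mulVec z) p := h2
        _ = (N ^ (k + 1)).mulVec z p := by
            rw [pow_succ', Matrix.mulVec_mulVec]
  have hnormz : 0 < ‖z‖ := by
    have := norm_le_pi_norm z p₀
    have h' : |z p₀| ≤ ‖z‖ := by simpa [Real.norm_eq_abs] using this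
    have : z p₀ ≤ ‖z‖ := le_trans (le_abs_self _) h'
    linarith
  set C : ℝ := ‖z‖ / z p₀ with hC
  have hCpos : 0 < C := div_pos hnormz hp₀
  have hbound : ∀ k : ℕ, r ^ k ≤ C * ‖N ^ k‖ := by
    intro k
    have h1 : r ^ k * z p₀ ≤ ‖(N ^ k).mulVec z‖ := by
      refine le_trans (key k p₀) ?_
      have := norm_le_pi_norm ((N ^ k).mulVec z) p₀
      have h' : |(N ^ k).mulVec z p₀| ≤ ‖(N ^ k).mulVec z‖ := by
        simpa [Real.norm_eq_abs] using this
      exact le_trans (le_abs_self _) h'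
    have h2 : ‖(N ^ k).mulVec z‖ ≤ ‖N ^ k‖ * ‖z‖ := Matrix.linfty_opNorm_mulVec _ _
    rw [hC, div_mul_eq_mul_div, le_div_iff₀ hp₀]
    calc r ^ k * z p₀ ≤ ‖N ^ k‖ * ‖z‖ := le_trans h1 h2
      _ = ‖z‖ * ‖N ^ k‖ := mul_comm _ _
  -- move to the complex matrix
  set Nc : Matrix n n ℂ := N.map (algebraMap ℝ ℂ) with hNcdef
  have hmap : ∀ k : ℕ, Nc ^ k = (N ^ k).map (algebraMap ℝ ℂ) := by
    intro k
    have h := map_pow ((algebraMap ℝ ℂ).mapMatrix) N k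
    simpa [RingHom.mapMatrix_apply, hNcdef] using h.symm
  have hnorm : ∀ k : ℕ, ‖Nc ^ k‖ = ‖N ^ k‖ := by
    intro k; rw [hmap k]; exact linfty_norm_map_complex _
  haveI : CompleteSpace (Matrix n n ℂ) := FiniteDimensional.complete ℂ _
  have hgel := spectrum.pow_nnnorm_pow_one_div_tendsto_nhds_spectralRadius Nc
  set L : ℝ≥0∞ := spectralRadius ℂ Nc with hL
  have hLne : L ≠ ⊤ :=
    (lt_of_le_of_lt (spectrum.spectralRadius_le_nnnorm Nc) ENNReal.coe_lt_top).ne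
  have htoReal : Tendsto (fun k : ℕ => ‖N ^ k‖ ^ (1 / (k : ℝ))) atTop (𝓝 L.toReal) := by
    have h := (ENNReal.tendsto_toReal hLne).comp hgel
    have heq : (fun k : ℕ => ‖N ^ k‖ ^ (1 / (k : ℝ)))
        = fun k : ℕ => (((‖Nc ^ k‖₊ : ℝ≥0∞) ^ (1 / (k : ℝ)))).toReal := by
      funext k
      rw [← ENNReal.toReal_rpow, ENNReal.coe_toReal, coe_nnnorm, hnorm k]
    rw [heq]; exact h
  have hC1 : Tendsto (fun k : ℕ => C ^ (1 / (k : ℝ))) atTop (𝓝 1) := by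
    have h0 : Tendsto (fun k : ℕ => (1 : ℝ) / (k : ℝ)) atTop (𝓝 0) :=
      tendsto_one_div_atTop_nhds_zero_nat
    have h := Filter.Tendsto.rpow (tendsto_const_nhds (x := C) (f := atTop)) h0
      (Or.inl hCpos.ne')
    simpa using h
  have hw : Tendsto (fun k : ℕ => C ^ (1 / (k : ℝ)) * ‖N ^ k‖ ^ (1 / (k : ℝ))) atTop
      (𝓝 L.toReal) := by
    have h := hC1.mul htoReal
    simpa using h
  have hev : ∀ᶠ k : ℕ in atTop, r ≤ C ^ (1 / (k : ℝ)) * ‖N ^ k‖ ^ (1 / (k : ℝ)) := by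
    filter_upwards [eventually_ge_atTop 1] with k hk
    have hk0 : (0 : ℝ) < k := by exact_mod_cast hk
    have h1 : r ^ (k : ℝ) ≤ C * ‖N ^ k‖ := by
      rw [Real.rpow_natCast]; exact hbound k
    have h2 : (r ^ (k : ℝ)) ^ (1 / (k : ℝ)) ≤ (C * ‖N ^ k‖) ^ (1 / (k : ℝ)) :=
      Real.rpow_le_rpow (Real.rpow_nonneg hr _) h1 (by positivity)
    have h3 : (r ^ (k : ℝ)) ^ (1 / (k : ℝ)) = r := by
      rw [← Real.rpow_mul hr, mul_one_div, div_self hk0.ne', Real.rpow_one]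
    have h4 : (C * ‖N ^ k‖) ^ (1 / (k : ℝ))
        = C ^ (1 / (k : ℝ)) * ‖N ^ k‖ ^ (1 / (k : ℝ)) :=
      Real.mul_rpow hCpos.le (norm_nonneg _)
    rw [h3, h4] at h2
    exact h2
  have hrL : r ≤ L.toReal := ge_of_tendsto hw hev
  -- relate to specRad
  have hne : (spectrum ℂ Nc).Nonempty := spectrum.nonempty Nc
  have hfin : (spectrum ℂ Nc).Finite := Nc.finite_spectrum
  obtain ⟨μ, hμmem, hμmax⟩ := hfin.toFinset.exists_max_image (fun z : ℂ => ‖z‖)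
    (by simpa using hne)
  rw [Set.Finite.mem_toFinset] at hμmem
  have hLμ : L ≤ (‖μ‖₊ : ℝ≥0∞) := by
    rw [hL, spectralRadius]
    refine iSup₂_le fun k hk => ?_
    have hk' : ‖k‖ ≤ ‖μ‖ := by
      simpa using hμmax k (hfin.mem_toFinset.mpr hk)
    exact_mod_cast hk'
  have hLreal : L.toReal ≤ ‖μ‖ := by
    have h := ENNReal.toReal_mono ENNReal.coe_ne_top hLμ
    simpa using h
  have hmem : ‖μ‖ ∈ (fun z : ℂ => ‖z‖) '' spectrum ℂ Nc := ⟨μ, hμmem, rfl⟩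
  have hbdd : BddAbove ((fun z : ℂ => ‖z‖) '' spectrum ℂ Nc) := (hfin.image _).bddAbove
  have hfinal : ‖μ‖ ≤ sSup ((fun z : ℂ => ‖z‖) '' spectrum ℂ Nc) := le_csSup hbdd hmem
  have : specRad N = sSup ((fun z : ℂ => ‖z‖) '' spectrum ℂ Nc) := rfl
  rw [this]
  linarith

end Aux

/-- Lower bound on the spectral radius from a `2 × 2` downward row sum
contraction: if `A` is the `2 × 2` matrix of minimum block row sums of the
nonnegative matrix `M` (square diagonal blocks), then
`tr(A)/2 + √((tr(A)/2)² − det A) ≤ ρ(M)`. -/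
theorem twoByTwo_downwardContraction_le_specRad
    {s₁ s₂ : ℕ} (hs₁ : 1 ≤ s₁) (hs₂ : 1 ≤ s₂)
    (M : Matrix (Fin s₁ ⊕ Fin s₂) (Fin s₁ ⊕ Fin s₂) ℝ)
    (hM : ∀ p q, 0 ≤ M p q)
    (A : Matrix (Fin 2) (Fin 2) ℝ)
    (hA00 : A 0 0 = Finset.univ.inf'
      (Finset.univ_nonempty_iff.mpr (Fin.pos_iff_nonempty.mp hs₁))
      (fun u : Fin s₁ => ∑ v : Fin s₁, M (Sum.inl u) (Sum.inl v)))
    (hA01 : A 0 1 = Finset.univ.inf'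
      (Finset.univ_nonempty_iff.mpr (Fin.pos_iff_nonempty.mp hs₁))
      (fun u : Fin s₁ => ∑ v : Fin s₂, M (Sum.inl u) (Sum.inr v)))
    (hA10 : A 1 0 = Finset.univ.inf'
      (Finset.univ_nonempty_iff.mpr (Fin.pos_iff_nonempty.mp hs₂))
      (fun u : Fin s₂ => ∑ v : Fin s₁, M (Sum.inr u) (Sum.inl v)))
    (hA11 : A 1 1 = Finset.univ.inf'
      (Finset.univ_nonempty_iff.mpr (Fin.pos_iff_nonempty.mp hs₂))
      (fun u : Fin s₂ => ∑ v : Fin s₂, M (Sum.inr u) (Sum.inr v))) :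
    A.trace / 2 + Real.sqrt ((A.trace / 2) ^ 2 - A.det) ≤ specRad M := by
  classical
  have ha0 : 0 ≤ A 0 0 := by
    rw [hA00]; exact Finset.le_inf' _ _ fun u _ => Finset.sum_nonneg fun v _ => hM _ _
  have hb0 : 0 ≤ A 0 1 := by
    rw [hA01]; exact Finset.le_inf' _ _ fun u _ => Finset.sum_nonneg fun v _ => hM _ _
  have hc0 : 0 ≤ A 1 0 := by
    rw [hA10]; exact Finset.le_inf' _ _ fun u _ => Finset.sum_nonneg fun v _ => hM _ _
  have hd0 : 0 ≤ A 1 1 := by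
    rw [hA11]; exact Finset.le_inf' _ _ fun u _ => Finset.sum_nonneg fun v _ => hM _ _
  set D : ℝ := (A.trace / 2) ^ 2 - A.det with hDdef
  set lam : ℝ := A.trace / 2 + Real.sqrt D with hlam
  have htr : A.trace = A 0 0 + A 1 1 := Matrix.trace_fin_two A
  have hdet : A.det = A 0 0 * A 1 1 - A 0 1 * A 1 0 := Matrix.det_fin_two A
  have hD' : D = ((A 0 0 - A 1 1) / 2) ^ 2 + A 0 1 * A 1 0 := by
    rw [hDdef, htr, hdet]; ring
  have hD0 : 0 ≤ D := by
    rw [hD']; exact add_nonneg (sq_nonneg _) (mul_nonneg hb0 hc0)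
  have hs2 : Real.sqrt D ^ 2 = D := Real.sq_sqrt hD0
  have hs0 : 0 ≤ Real.sqrt D := Real.sqrt_nonneg D
  have habs : |(A 0 0 - A 1 1) / 2| ≤ Real.sqrt D := by
    have h1 : ((A 0 0 - A 1 1) / 2) ^ 2 ≤ D := by
      rw [hD']; nlinarith [mul_nonneg hb0 hc0]
    have h2 := Real.sqrt_le_sqrt h1
    rwa [Real.sqrt_sq_eq_abs] at h2
  have hsge1 : (A 0 0 - A 1 1) / 2 ≤ Real.sqrt D := le_trans (le_abs_self _) habs
  have hsge2 : (A 1 1 - A 0 0) / 2 ≤ Real.sqrt D := by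
    calc (A 1 1 - A 0 0) / 2 = -((A 0 0 - A 1 1) / 2) := by ring
      _ ≤ |(A 0 0 - A 1 1) / 2| := neg_le_abs _
      _ ≤ Real.sqrt D := habs
  have hla : A 0 0 ≤ lam := by rw [hlam, htr]; linarith
  have hld : A 1 1 ≤ lam := by rw [hlam, htr]; linarith
  have hlam0 : 0 ≤ lam := le_trans ha0 hla
  have hquad : lam ^ 2 - (A 0 0 + A 1 1) * lam + (A 0 0 * A 1 1 - A 0 1 * A 1 0) = 0 := by
    rw [hlam, htr]
    linear_combination hs2 + hD'
  -- main reduction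
  have main : ∀ y0 y1 : ℝ, 0 ≤ y0 → 0 ≤ y1 →
      lam * y0 ≤ A 0 0 * y0 + A 0 1 * y1 →
      lam * y1 ≤ A 1 0 * y0 + A 1 1 * y1 →
      (∃ p : Fin s₁ ⊕ Fin s₂, 0 < Sum.elim (fun _ : Fin s₁ => y0) (fun _ : Fin s₂ => y1) p) →
      lam ≤ specRad M := by
    rintro y0 y1 hy0 hy1 hrow1 hrow2 ⟨p₀, hp₀⟩
    haveI : Nonempty (Fin s₁ ⊕ Fin s₂) := ⟨Sum.inl ⟨0, hs₁⟩⟩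
    refine le_specRad_of_subinvariant M hM hlam0
      (z := Sum.elim (fun _ : Fin s₁ => y0) (fun _ : Fin s₂ => y1))
      (fun p => ?_) p₀ hp₀ (fun p => ?_)
    · cases p <;> simpa using (by assumption : _)
    · cases p with
      | inl u =>
        have hsum : M.mulVec (Sum.elim (fun _ : Fin s₁ => y0) (fun _ : Fin s₂ => y1))
            (Sum.inl u)
            = (∑ v : Fin s₁, M (Sum.inl u) (Sum.inl v)) * y0
              + (∑ v : Fin s₂, M (Sum.inl u) (Sum.inr v)) * y1 := by
          simp [Matrix.mulVec, dotProduct, Fintype.sum_sum_type, Finset.sum_mul]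
        rw [hsum]
        have h1 : A 0 0 ≤ ∑ v : Fin s₁, M (Sum.inl u) (Sum.inl v) := by
          rw [hA00]; exact Finset.inf'_le _ (Finset.mem_univ u)
        have h2 : A 0 1 ≤ ∑ v : Fin s₂, M (Sum.inl u) (Sum.inr v) := by
          rw [hA01]; exact Finset.inf'_le _ (Finset.mem_univ u)
        show lam * y0 ≤ _
        calc lam * y0 ≤ A 0 0 * y0 + A 0 1 * y1 := hrow1
          _ ≤ _ := add_le_add (mul_le_mul_of_nonneg_right h1 hy0)
              (mul_le_mul_of_nonneg_right h2 hy1)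
      | inr u =>
        have hsum : M.mulVec (Sum.elim (fun _ : Fin s₁ => y0) (fun _ : Fin s₂ => y1))
            (Sum.inr u)
            = (∑ v : Fin s₁, M (Sum.inr u) (Sum.inl v)) * y0
              + (∑ v : Fin s₂, M (Sum.inr u) (Sum.inr v)) * y1 := by
          simp [Matrix.mulVec, dotProduct, Fintype.sum_sum_type, Finset.sum_mul]
        rw [hsum]
        have h1 : A 1 0 ≤ ∑ v : Fin s₁, M (Sum.inr u) (Sum.inl v) := by
          rw [hA10]; exact Finset.inf'_le _ (Finset.mem_univ u)
        have h2 : A 1 1 ≤ ∑ v : Fin s₂, M (Sum.inr u) (Sum.inr v) := by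
          rw [hA11]; exact Finset.inf'_le _ (Finset.mem_univ u)
        show lam * y1 ≤ _
        calc lam * y1 ≤ A 1 0 * y0 + A 1 1 * y1 := hrow2
          _ ≤ _ := add_le_add (mul_le_mul_of_nonneg_right h1 hy0)
              (mul_le_mul_of_nonneg_right h2 hy1)
  show lam ≤ specRad M
  rcases lt_or_ge 0 (A 0 1 + (lam - A 0 0)) with hpos | hneg
  · refine main (A 0 1) (lam - A 0 0) hb0 (by linarith) (le_of_eq (by ring))
      (le_of_eq (by linear_combination hquad)) ?_
    by_cases h : 0 < A 0 1
    · exact ⟨Sum.inl ⟨0, hs₁⟩, by simpa using h⟩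
    · have : 0 < lam - A 0 0 := by
        have hb : A 0 1 = 0 := le_antisymm (not_lt.mp h) hb0
        linarith
      exact ⟨Sum.inr ⟨0, hs₂⟩, by simpa using this⟩
  · have hlameq : lam = A 0 0 := le_antisymm (by linarith) hla
    refine main 1 0 one_pos.le le_rfl ?_ ?_ ⟨Sum.inl ⟨0, hs₁⟩, by norm_num⟩
    · simp only [mul_one, mul_zero, add_zero]; linarith
    · simpa using hc0
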